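/- Let R ⊆ Q be rings such that the inclusion R → Q is an epimorphism in the category of rings and Q is flat as a left R-module. If Q is projective as a left R-module, then Q is finitely generated as a left R-module. -/

import Mathlib

/-!
STATEMENT 11: Let R ⊆ Q be rings such that the inclusion R → Q is an epimorphism in the
category of rings and Q is flat as a left R-module. If Q is projective as a left R-module,
then Q is finitely generated as a left R-module.

We formalize the pair of rings `R ⊆ Q` by an injective ring homomorphism `φ : R →+* Q`
which is an epimorphism in the category of rings, together with a left `R`-module structure
on `Q` given by `r • q = φ r * q`.  Flatness of a left module over a (possibly
noncommutative) ring is expressed by the standard equational criterion.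
-/

universe u

open TensorProduct

namespace Stmt11Aux

variable {R Q : Type u} [Ring R] [Ring Q]

/-- The balancing submodule: relations making the tensor product `R`-balanced. -/
def W (φ : R →+* Q) : Submodule ℤ (Q ⊗[ℤ] Q) :=
  Submodule.span ℤ {x | ∃ a : Q, ∃ r : R, ∃ b : Q,
    x = (a * φ r) ⊗ₜ[ℤ] b - a ⊗ₜ[ℤ] (φ r * b)}

/-- Left multiplication on the first factor. -/
noncomputable def lmulT (q : Q) : Q ⊗[ℤ] Q →ₗ[ℤ] Q ⊗[ℤ] Q :=
  LinearMap.rTensor Q (LinearMap.mulLeft ℤ q)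

/-- Right multiplication on the second factor. -/
noncomputable def rmulT (q : Q) : Q ⊗[ℤ] Q →ₗ[ℤ] Q ⊗[ℤ] Q :=
  LinearMap.lTensor Q (LinearMap.mulRight ℤ q)

lemma extZ {f g : Q ⊗[ℤ] Q →ₗ[ℤ] Q ⊗[ℤ] Q} (h : ∀ a b, f (a ⊗ₜ[ℤ] b) = g (a ⊗ₜ[ℤ] b)) :
    f = g :=
  LinearMap.ext fun t => TensorProduct.induction_on t (by rw [map_zero, map_zero]) h
    (fun x y hx hy => by rw [map_add, map_add, hx, hy])

@[simp] lemma lmulT_tmul (q a b : Q) : lmulT q (a ⊗ₜ[ℤ] b) = (q * a) ⊗ₜ[ℤ] b := by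
  exact LinearMap.rTensor_tmul _ _ _ _

@[simp] lemma rmulT_tmul (q a b : Q) : rmulT q (a ⊗ₜ[ℤ] b) = a ⊗ₜ[ℤ] (b * q) := by
  exact LinearMap.lTensor_tmul _ _ _ _

lemma lmulT_lmulT (x y : Q) (t : Q ⊗[ℤ] Q) : lmulT x (lmulT y t) = lmulT (x * y) t := by
  have : (lmulT (Q := Q) x).comp (lmulT y) = lmulT (x * y) :=
    extZ fun a b => by simp [mul_assoc]
  simpa using congrArg (fun f => f t) this

lemma rmulT_rmulT (x y : Q) (t : Q ⊗[ℤ] Q) : rmulT y (rmulT x t) = rmulT (x * y) t := by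
  have : (rmulT (Q := Q) y).comp (rmulT x) = rmulT (x * y) :=
    extZ fun a b => by simp [mul_assoc]
  simpa using congrArg (fun f => f t) this

lemma lmulT_rmulT (x y : Q) (t : Q ⊗[ℤ] Q) : lmulT x (rmulT y t) = rmulT y (lmulT x t) := by
  have : (lmulT (Q := Q) x).comp (rmulT y) = (rmulT y).comp (lmulT x) :=
    extZ fun a b => by simp
  simpa using congrArg (fun f => f t) this

lemma lmulT_one (t : Q ⊗[ℤ] Q) : lmulT 1 t = t := by
  have : lmulT (Q := Q) 1 = LinearMap.id := extZ fun a b => by simp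
  simp [this]

lemma rmulT_one (t : Q ⊗[ℤ] Q) : rmulT 1 t = t := by
  have : rmulT (Q := Q) 1 = LinearMap.id := extZ fun a b => by simp
  simp [this]

lemma lmulT_add' (x y : Q) (t : Q ⊗[ℤ] Q) : lmulT (x + y) t = lmulT x t + lmulT y t := by
  have : lmulT (Q := Q) (x + y) = lmulT x + lmulT y :=
    extZ fun a b => by simp [add_mul, TensorProduct.add_tmul]
  simp [this]

lemma rmulT_add' (x y : Q) (t : Q ⊗[ℤ] Q) : rmulT (x + y) t = rmulT x t + rmulT y t := by
  have : rmulT (Q := Q) (x + y) = rmulT x + rmulT y :=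
    extZ fun a b => by simp [mul_add, TensorProduct.tmul_add]
  simp [this]

lemma lmulT_zero' (t : Q ⊗[ℤ] Q) : lmulT (0 : Q) t = 0 := by
  have : lmulT (Q := Q) 0 = 0 := extZ fun a b => by simp
  simp [this]

lemma rmulT_zero' (t : Q ⊗[ℤ] Q) : rmulT (0 : Q) t = 0 := by
  have : rmulT (Q := Q) 0 = 0 := extZ fun a b => by simp
  simp [this]

lemma lmulT_W (φ : R →+* Q) (q : Q) : W φ ≤ Submodule.comap (lmulT q) (W φ) := by
  rw [W, Submodule.span_le]
  rintro x ⟨a, r, b, rfl⟩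
  simp only [SetLike.mem_coe, Submodule.mem_comap, map_sub, lmulT_tmul]
  apply Submodule.subset_span
  exact ⟨q * a, r, b, by rw [mul_assoc]⟩

lemma rmulT_W (φ : R →+* Q) (q : Q) : W φ ≤ Submodule.comap (rmulT q) (W φ) := by
  rw [W, Submodule.span_le]
  rintro x ⟨a, r, b, rfl⟩
  simp only [SetLike.mem_coe, Submodule.mem_comap, map_sub, rmulT_tmul]
  apply Submodule.subset_span
  exact ⟨a, r, b * q, by rw [mul_assoc]⟩

/-- The balanced tensor product `Q ⊗[R] Q`, as a quotient of `Q ⊗[ℤ] Q`. -/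
def M (φ : R →+* Q) : Type u := (Q ⊗[ℤ] Q) ⧸ W φ

noncomputable instance {φ : R →+* Q} : AddCommGroup (M φ) :=
  inferInstanceAs (AddCommGroup ((Q ⊗[ℤ] Q) ⧸ W φ))

noncomputable instance {φ : R →+* Q} : Module ℤ (M φ) :=
  inferInstanceAs (Module ℤ ((Q ⊗[ℤ] Q) ⧸ W φ))

def mkM (φ : R →+* Q) (t : Q ⊗[ℤ] Q) : M φ := Submodule.Quotient.mk t

noncomputable def Lact (φ : R →+* Q) (q : Q) : M φ →ₗ[ℤ] M φ :=
  Submodule.mapQ _ _ (lmulT q) (lmulT_W φ q)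

noncomputable def Ract (φ : R →+* Q) (q : Q) : M φ →ₗ[ℤ] M φ :=
  Submodule.mapQ _ _ (rmulT q) (rmulT_W φ q)

@[simp] lemma Lact_mk (φ : R →+* Q) (q : Q) (t : Q ⊗[ℤ] Q) :
    Lact φ q (mkM φ t) = mkM φ (lmulT q t) := rfl

@[simp] lemma Ract_mk (φ : R →+* Q) (q : Q) (t : Q ⊗[ℤ] Q) :
    Ract φ q (mkM φ t) = mkM φ (rmulT q t) := rfl

lemma mkM_surjective (φ : R →+* Q) (m : M φ) : ∃ t, mkM φ t = m :=
  Submodule.Quotient.mk_surjective _ m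

-- Pointwise action lemmas
section ActLemmas
variable (φ : R →+* Q)

lemma Lact_Lact (x y : Q) (m : M φ) : Lact φ x (Lact φ y m) = Lact φ (x * y) m := by
  obtain ⟨t, rfl⟩ := mkM_surjective φ m
  simp [lmulT_lmulT]

lemma Ract_Ract (x y : Q) (m : M φ) : Ract φ y (Ract φ x m) = Ract φ (x * y) m := by
  obtain ⟨t, rfl⟩ := mkM_surjective φ m
  simp [rmulT_rmulT]

lemma Lact_Ract (x y : Q) (m : M φ) : Lact φ x (Ract φ y m) = Ract φ y (Lact φ x m) := by
  obtain ⟨t, rfl⟩ := mkM_surjective φ m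
  simp [lmulT_rmulT]

lemma Lact_one (m : M φ) : Lact φ 1 m = m := by
  obtain ⟨t, rfl⟩ := mkM_surjective φ m
  simp [lmulT_one]

lemma Ract_one (m : M φ) : Ract φ 1 m = m := by
  obtain ⟨t, rfl⟩ := mkM_surjective φ m
  simp [rmulT_one]

lemma Lact_add' (x y : Q) (m : M φ) : Lact φ (x + y) m = Lact φ x m + Lact φ y m := by
  obtain ⟨t, rfl⟩ := mkM_surjective φ m
  simp only [Lact_mk, lmulT_add']
  rfl

lemma Ract_add' (x y : Q) (m : M φ) : Ract φ (x + y) m = Ract φ x m + Ract φ y m := by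
  obtain ⟨t, rfl⟩ := mkM_surjective φ m
  simp only [Ract_mk, rmulT_add']
  rfl

lemma Lact_zero' (m : M φ) : Lact φ 0 m = 0 := by
  obtain ⟨t, rfl⟩ := mkM_surjective φ m
  simp only [Lact_mk, lmulT_zero']
  rfl

lemma Ract_zero' (m : M φ) : Ract φ 0 m = 0 := by
  obtain ⟨t, rfl⟩ := mkM_surjective φ m
  simp only [Ract_mk, rmulT_zero']
  rfl

end ActLemmas

/-- The square-zero extension `Q ⊕ (Q ⊗_R Q)`. -/
def T (φ : R →+* Q) : Type u := Q × M φ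

noncomputable instance {φ : R →+* Q} : AddCommGroup (T φ) :=
  inferInstanceAs (AddCommGroup (Q × M φ))

noncomputable instance instRingT {φ : R →+* Q} : Ring (T φ) := {
  (inferInstance : AddCommGroup (T φ)) with
  mul := fun p q => (p.1 * q.1, Lact φ p.1 q.2 + Ract φ q.1 p.2)
  one := ((1 : Q), (0 : M φ))
  mul_assoc := fun p q s => by
    refine Prod.ext (mul_assoc _ _ _) ?_
    show Lact φ (p.1 * q.1) s.2 + Ract φ s.1 (Lact φ p.1 q.2 + Ract φ q.1 p.2) =
      Lact φ p.1 (Lact φ q.1 s.2 + Ract φ s.1 q.2) + Ract φ (q.1 * s.1) p.2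
    rw [map_add, map_add, ← Lact_Lact, ← Ract_Ract, Lact_Ract]
    abel
  one_mul := fun p => by
    refine Prod.ext (one_mul _) ?_
    show Lact φ 1 p.2 + Ract φ p.1 0 = p.2
    rw [Lact_one, map_zero, add_zero]
  mul_one := fun p => by
    refine Prod.ext (mul_one _) ?_
    show Lact φ p.1 0 + Ract φ 1 p.2 = p.2
    rw [Ract_one, map_zero, zero_add]
  left_distrib := fun p q s => by
    refine Prod.ext (mul_add _ _ _) ?_
    show Lact φ p.1 (q.2 + s.2) + Ract φ (q.1 + s.1) p.2 =
      (Lact φ p.1 q.2 + Ract φ q.1 p.2) + (Lact φ p.1 s.2 + Ract φ s.1 p.2)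
    rw [map_add, Ract_add']
    abel
  right_distrib := fun p q s => by
    refine Prod.ext (add_mul _ _ _) ?_
    show Lact φ (p.1 + q.1) s.2 + Ract φ s.1 (p.2 + q.2) =
      (Lact φ p.1 s.2 + Ract φ s.1 p.2) + (Lact φ q.1 s.2 + Ract φ s.1 q.2)
    rw [map_add, Lact_add']
    abel
  zero_mul := fun p => by
    refine Prod.ext (zero_mul _) ?_
    show Lact φ 0 p.2 + Ract φ p.1 0 = 0
    rw [Lact_zero', map_zero, add_zero]
  mul_zero := fun p => by
    refine Prod.ext (mul_zero _) ?_
    show Lact φ p.1 0 + Ract φ 0 p.2 = 0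
    rw [Ract_zero', map_zero, add_zero] }

lemma T_mul_def {φ : R →+* Q} (p q : T φ) :
    p * q = (p.1 * q.1, Lact φ p.1 q.2 + Ract φ q.1 p.2) := rfl

lemma T_one_def {φ : R →+* Q} : (1 : T φ) = ((1 : Q), (0 : M φ)) := rfl

/-- The derivation `q ↦ q ⊗ 1 - 1 ⊗ q`. -/
noncomputable def dT (φ : R →+* Q) (q : Q) : M φ := mkM φ (q ⊗ₜ[ℤ] 1 - 1 ⊗ₜ[ℤ] q)

/-- The ring hom `q ↦ (q, dq)`. -/
noncomputable def gHom (φ : R →+* Q) : Q →+* T φ where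
  toFun q := (q, dT φ q)
  map_one' := by
    refine Prod.ext rfl ?_
    show dT φ 1 = 0
    simp [dT, mkM]
    rfl
  map_mul' x y := by
    refine Prod.ext rfl ?_
    show dT φ (x * y) = Lact φ x (dT φ y) + Ract φ y (dT φ x)
    simp only [dT, Lact_mk, Ract_mk, map_sub, lmulT_tmul, rmulT_tmul, one_mul, mul_one]
    show Submodule.Quotient.mk _ = Submodule.Quotient.mk _ + Submodule.Quotient.mk _
    erw [← Submodule.Quotient.mk_add]
    congr 1
    abel
  map_zero' := by
    refine Prod.ext rfl ?_
    show dT φ 0 = 0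
    simp [dT, mkM]
    rfl
  map_add' x y := by
    refine Prod.ext rfl ?_
    show dT φ (x + y) = dT φ x + dT φ y
    simp only [dT, mkM]
    erw [← Submodule.Quotient.mk_add]
    congr 1
    rw [TensorProduct.add_tmul, TensorProduct.tmul_add]
    abel

/-- The ring hom `q ↦ (q, 0)`. -/
noncomputable def hHom (φ : R →+* Q) : Q →+* T φ where
  toFun q := (q, 0)
  map_one' := rfl
  map_mul' x y := by
    refine Prod.ext rfl ?_
    show (0 : M φ) = Lact φ x 0 + Ract φ y 0
    rw [map_zero, map_zero, add_zero]
  map_zero' := rfl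
  map_add' x y := by
    refine Prod.ext rfl ?_
    show (0 : M φ) = 0 + 0
    rw [add_zero]

lemma dT_phi (φ : R →+* Q) (r : R) : dT φ (φ r) = 0 := by
  rw [dT, mkM]
  erw [Submodule.Quotient.mk_eq_zero]
  apply Submodule.subset_span
  exact ⟨1, r, 1, by rw [one_mul, mul_one]⟩

/-- KEY LEMMA: if `φ` is a ring epimorphism, every left `R`-linear endomorphism of `Q`
is right multiplication by its value at `1`. -/
lemma key (φ : R →+* Q)
    (hepi : ∀ (T : Type u) [Ring T] (g h : Q →+* T), g.comp φ = h.comp φ → g = h)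
    [Module R Q] (hsmul : ∀ (r : R) (q : Q), r • q = φ r * q)
    (g : Q →ₗ[R] Q) (q : Q) : g q = q * g 1 := by
  -- first, dT φ q = 0 for all q by the epimorphism property
  have hd : ∀ x : Q, dT φ x = 0 := by
    have heq : gHom φ = hHom φ := by
      apply hepi
      ext r
      refine Prod.ext rfl ?_
      show dT φ (φ r) = 0
      exact dT_phi φ r
    intro x
    have := congrArg (fun f => (f x).2) heq
    exact this
  -- the pairing (a, b) ↦ a * g b
  have hsc : ∀ (z : ℤ) (a b : Q), (z • a) * b = z • (a * b) := fun z a b => by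
    rw [zsmul_eq_mul, zsmul_eq_mul, mul_assoc]
  have hsc' : ∀ (z : ℤ) (a b : Q), a * (z • b) = z • (a * b) := fun z a b => by
    rw [zsmul_eq_mul, zsmul_eq_mul]
    rw [show ((z : Q) * b) = z • b from (zsmul_eq_mul b z).symm]
    rw [mul_smul_comm, zsmul_eq_mul]
  let B : Q →ₗ[ℤ] Q →ₗ[ℤ] Q := LinearMap.mk₂ ℤ (fun a b => a * g b)
    (fun a a' b => show (a + a') * g b = a * g b + a' * g b by rw [add_mul])
    (fun z a b => show (z • a) * g b = z • (a * g b) from hsc z a (g b))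
    (fun a b b' => show a * g (b + b') = a * g b + a * g b' by rw [map_add, mul_add])
    (fun z a b => show a * g (z • b) = z • (a * g b) by rw [map_zsmul, hsc' z a (g b)])
  let H : Q ⊗[ℤ] Q →ₗ[ℤ] Q := TensorProduct.lift B
  have hker : W φ ≤ LinearMap.ker H := by
    rw [W, Submodule.span_le]
    rintro x ⟨a, r, b, rfl⟩
    simp only [SetLike.mem_coe, LinearMap.mem_ker, map_sub]
    have h1 : H ((a * φ r) ⊗ₜ[ℤ] b) = (a * φ r) * g b := by
      simp only [H, B]
      erw [TensorProduct.lift.tmul]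
      rfl
    have h2 : H (a ⊗ₜ[ℤ] (φ r * b)) = a * g (φ r * b) := by
      simp only [H, B]
      erw [TensorProduct.lift.tmul]
      rfl
    rw [h1, h2, ← hsmul, map_smul, hsmul, ← mul_assoc, sub_self]
  let Hq : M φ →ₗ[ℤ] Q := Submodule.liftQ (W φ) H hker
  have h0 : Hq (dT φ q) = q * g 1 - 1 * g q := by
    show Hq (mkM φ _) = _
    rw [mkM]
    erw [Submodule.liftQ_apply]
    simp [H, B]
    erw [map_sub, TensorProduct.lift.tmul, TensorProduct.lift.tmul]
    simp
  rw [hd q] at h0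
  rw [map_zero] at h0
  rw [one_mul] at h0
  exact (sub_eq_zero.mp h0.symm).symm
end Stmt11Aux

/-- The equational criterion for flatness of a left module over an arbitrary ring:
whenever `∑ rᵢ • xᵢ = 0`, the `xᵢ` can be written as `R`-linear combinations
`xᵢ = ∑ⱼ aᵢⱼ • yⱼ` of elements `yⱼ` with `∑ᵢ rᵢ * aᵢⱼ = 0` for all `j`. -/
def IsFlatMod (R M : Type u) [Ring R] [AddCommGroup M] [Module R M] : Prop :=
  ∀ (n : ℕ) (r : Fin n → R) (x : Fin n → M), (∑ i, r i • x i) = 0 →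
    ∃ (m : ℕ) (a : Fin n → Fin m → R) (y : Fin m → M),
      (∀ i, x i = ∑ j, a i j • y j) ∧ ∀ j, (∑ i, r i * a i j) = 0

theorem stmt11 (R Q : Type u) [Ring R] [Ring Q] (φ : R →+* Q)
    (hinj : Function.Injective φ)
    (hepi : ∀ (T : Type u) [Ring T] (g h : Q →+* T), g.comp φ = h.comp φ → g = h)
    [Module R Q] (hsmul : ∀ (r : R) (q : Q), r • q = φ r * q)
    (hflat : IsFlatMod R Q)
    (hproj : Module.Projective R Q) :
    Module.Finite R Q := by
  obtain ⟨s, hs⟩ := hproj.out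
  have hkey : ∀ (p q : Q), φ (s q p) = q * φ (s 1 p) := by
    intro p q
    let g : Q →ₗ[R] Q := {
      toFun := fun x => φ (s x p)
      map_add' := fun x y => by
        show φ (s (x + y) p) = φ (s x p) + φ (s y p)
        rw [map_add, Finsupp.add_apply, map_add]
      map_smul' := fun r x => by
        show φ (s (r • x) p) = r • φ (s x p)
        rw [map_smul, Finsupp.smul_apply, smul_eq_mul, map_mul, hsmul] }
    exact Stmt11Aux.key φ hepi hsmul g q
  have hsupp : ∀ q : Q, (s q).support ⊆ (s 1).support := by
    intro q p hp
    rw [Finsupp.mem_support_iff] at hp ⊢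
    intro h0
    apply hp
    apply hinj
    rw [map_zero, hkey p q, h0, map_zero, mul_zero]
  constructor
  refine ⟨(s 1).support, ?_⟩
  rw [Submodule.eq_top_iff']
  intro q
  have hq : Finsupp.linearCombination R id (s q) = q := hs q
  rw [← hq, Finsupp.linearCombination_apply, Finsupp.sum]
  apply Submodule.sum_mem
  intro p hp
  simp only [id_eq]
  exact Submodule.smul_mem _ _ (Submodule.subset_span (hsupp q hp))
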